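/- arXiv:1711.00879 — 2 statements merged into one kernel-verified Lean document; each statement's English description precedes it below -/
import Mathlib

section
/- Let γ be a multi-index with |γ| = 2m and suppose u₀ ∈ ℝⁿ with |u₀| = 1 and C₀ > 0 satisfy |D^γΓ(t u₀)| ≥ C₀ t^{−n} for all t > 0. Then there exists t₀ > 0 such that, setting u = t₀ u₀, for every v ∈ ℝⁿ with |v| ≤ 2 and every real r ≠ 0 one has |D^γΓ(r(u + v)) − D^γΓ(r u)| ≤ (1/2)|D^γΓ(r u)|. -/
open MeasureTheory Metric Set
open scoped ENNReal NNReal Classical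

noncomputable section

/-- Axis-parallel closed cube with center `c` and half-side `r`. -/
def cube {n : ℕ} (c : EuclideanSpace ℝ (Fin n)) (r : ℝ) : Set (EuclideanSpace ℝ (Fin n)) :=
  {y | ∀ i, |y i - c i| ≤ r}

/-- A weight: locally integrable and a.e. positive on `ℝⁿ`. -/
def IsWeight {n : ℕ} (w : EuclideanSpace ℝ (Fin n) → ℝ) : Prop :=
  LocallyIntegrable w volume ∧
    ∀ᵐ x ∂(volume : Measure (EuclideanSpace ℝ (Fin n))), 0 < w x

/-- The Muckenhoupt `A_p` condition (over all cubes). -/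
def IsAp {n : ℕ} (p : ℝ) (w : EuclideanSpace ℝ (Fin n) → ℝ) : Prop :=
  ∃ C : ℝ, 0 < C ∧ ∀ (c : EuclideanSpace ℝ (Fin n)) (r : ℝ), 0 < r →
    ((volume (cube c r))⁻¹ * ∫⁻ x in cube c r, ENNReal.ofReal (w x)) *
      ((volume (cube c r))⁻¹ *
          ∫⁻ x in cube c r, ENNReal.ofReal (w x ^ (-(1 / (p - 1))))) ^ (p - 1) ≤
      ENNReal.ofReal C

/-- Distance between two sets. -/
def setDist {n : ℕ} (A B : Set (EuclideanSpace ℝ (Fin n))) : ℝ :=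
  sInf (Set.image2 dist A B)

/-- A β-admissible ball contained in Ω : `diam B < β * dist(B, ∂Ω)`. -/
def IsAdmissibleBall {n : ℕ} (Ω : Set (EuclideanSpace ℝ (Fin n))) (β : ℝ)
    (c : EuclideanSpace ℝ (Fin n)) (r : ℝ) : Prop :=
  0 < r ∧ ball c r ⊆ Ω ∧ Metric.diam (ball c r) < β * setDist (ball c r) (frontier Ω)

/-- The local Muckenhoupt class `A_p^β(Ω)`. -/
def IsApLocBeta {n : ℕ} (Ω : Set (EuclideanSpace ℝ (Fin n))) (β p : ℝ)
    (w : EuclideanSpace ℝ (Fin n) → ℝ) : Prop :=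
  ∃ C : ℝ, 0 < C ∧ ∀ c r, IsAdmissibleBall Ω β c r →
    ((volume (ball c r))⁻¹ * ∫⁻ x in ball c r, ENNReal.ofReal (w x)) *
      ((volume (ball c r))⁻¹ *
          ∫⁻ x in ball c r, ENNReal.ofReal (w x ^ (-(1 / (p - 1))))) ^ (p - 1) ≤
      ENNReal.ofReal C

/-- Hardy–Littlewood maximal function (over cubes containing `x`). -/
def maximalFn {n : ℕ} (f : EuclideanSpace ℝ (Fin n) → ℝ)
    (x : EuclideanSpace ℝ (Fin n)) : ℝ≥0∞ :=
  ⨆ (c : EuclideanSpace ℝ (Fin n)) (r : ℝ) (_ : 0 < r) (_ : x ∈ cube c r),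
    (volume (cube c r))⁻¹ * ∫⁻ y in cube c r, ENNReal.ofReal |f y|

/-- Local sharp maximal function over cubes `x ∈ Q ⊆ Ω`. -/
def sharpMaximalFn {n : ℕ} (Ω : Set (EuclideanSpace ℝ (Fin n)))
    (f : EuclideanSpace ℝ (Fin n) → ℝ) (x : EuclideanSpace ℝ (Fin n)) : ℝ≥0∞ :=
  ⨆ (c : EuclideanSpace ℝ (Fin n)) (r : ℝ) (_ : 0 < r) (_ : x ∈ cube c r)
      (_ : cube c r ⊆ Ω),
    (volume (cube c r))⁻¹ *
      ∫⁻ y in cube c r,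
        ENNReal.ofReal |f y - (volume (cube c r)).toReal⁻¹ * ∫ z in cube c r, f z|

/-- The fundamental solution of `(−Δ)^m` in `ℝⁿ` (up to a nonzero constant factor). -/
def fundGamma (n m : ℕ) (x : EuclideanSpace ℝ (Fin n)) : ℝ :=
  if Odd n ∨ 2 * m < n then ‖x‖ ^ ((2 * m : ℝ) - n)
  else ‖x‖ ^ ((2 * m : ℝ) - n) * Real.log ‖x‖

/-- Partial derivative in the `i`-th coordinate direction. -/
def pderivE {n : ℕ} (i : Fin n) (f : EuclideanSpace ℝ (Fin n) → ℝ)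
    (x : EuclideanSpace ℝ (Fin n)) : ℝ :=
  fderiv ℝ f x (EuclideanSpace.single i 1)

/-- Multi-index derivative `D^γ`. -/
def multiDeriv {n : ℕ} (γ : Fin n → ℕ) (f : EuclideanSpace ℝ (Fin n) → ℝ) :
    EuclideanSpace ℝ (Fin n) → ℝ :=
  (List.finRange n).foldr (fun i g => (pderivE i)^[γ i] g) f


open scoped ContDiff

namespace AuxMDC

variable {n : ℕ} {U : Set (EuclideanSpace ℝ (Fin n))}

lemma pderivE_contDiffOn (hU : IsOpen U) {f : EuclideanSpace ℝ (Fin n) → ℝ}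
    (hf : ContDiffOn ℝ ∞ f U) (i : Fin n) : ContDiffOn ℝ ∞ (pderivE i f) U := by
  have h1 : ContDiffOn ℝ ∞ (fderiv ℝ f) U := hf.fderiv_of_isOpen hU (by simp)
  exact h1.clm_apply contDiffOn_const

lemma iter_contDiffOn (hU : IsOpen U) {f : EuclideanSpace ℝ (Fin n) → ℝ}
    (hf : ContDiffOn ℝ ∞ f U) (i : Fin n) (k : ℕ) :
    ContDiffOn ℝ ∞ ((pderivE i)^[k] f) U := by
  induction k generalizing f with
  | zero => exact hf
  | succ k ih =>
    rw [Function.iterate_succ']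
    exact pderivE_contDiffOn hU (ih hf) i

lemma pderivE_congrOn (hU : IsOpen U) {f g : EuclideanSpace ℝ (Fin n) → ℝ}
    (h : ∀ y ∈ U, f y = g y) {x} (hx : x ∈ U) (i : Fin n) :
    pderivE i f x = pderivE i g x := by
  have hev : f =ᶠ[nhds x] g :=
    Filter.eventually_of_mem (hU.mem_nhds hx) h
  unfold pderivE
  rw [hev.fderiv_eq]

lemma iter_congrOn (hU : IsOpen U) {f g : EuclideanSpace ℝ (Fin n) → ℝ}
    (h : ∀ y ∈ U, f y = g y) (i : Fin n) (k : ℕ) :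
    ∀ x ∈ U, (pderivE i)^[k] f x = (pderivE i)^[k] g x := by
  induction k generalizing f g with
  | zero => exact h
  | succ k ih =>
    intro x hx
    rw [Function.iterate_succ']
    exact pderivE_congrOn hU (ih h) hx i

lemma pderivE_comb {f g : EuclideanSpace ℝ (Fin n) → ℝ} {x}
    (hf : DifferentiableAt ℝ f x) (hg : DifferentiableAt ℝ g x) (a b : ℝ) (i : Fin n) :
    pderivE i (fun y => a * f y + b * g y) x = a * pderivE i f x + b * pderivE i g x := by
  unfold pderivE
  rw [fderiv_fun_add ((hf.const_mul a)) ((hg.const_mul b)), fderiv_const_mul hf,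
    fderiv_const_mul hg]
  simp

lemma pderivE_const_mul {f : EuclideanSpace ℝ (Fin n) → ℝ} {x}
    (hf : DifferentiableAt ℝ f x) (a : ℝ) (i : Fin n) :
    pderivE i (fun y => a * f y) x = a * pderivE i f x := by
  unfold pderivE
  rw [fderiv_const_mul hf]
  simp

lemma pderivE_smul_comp {g : EuclideanSpace ℝ (Fin n) → ℝ} {x} (c : ℝ)
    (hg : DifferentiableAt ℝ g (c • x)) (i : Fin n) :
    pderivE i (fun y => g (c • y)) x = c * pderivE i g (c • x) := by
  set L : EuclideanSpace ℝ (Fin n) →L[ℝ] EuclideanSpace ℝ (Fin n) :=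
    c • ContinuousLinearMap.id ℝ _ with hL
  have hLy : ∀ y, L y = c • y := fun y => rfl
  have h1 : (fun y => g (c • y)) = g ∘ L := by
    funext y; simp [hLy]
  unfold pderivE
  rw [h1, fderiv_comp x (by rw [hLy]; exact hg) L.differentiableAt, L.fderiv]
  simp [hLy, _root_.map_smul]

lemma diffAt_of (hU : IsOpen U) {f : EuclideanSpace ℝ (Fin n) → ℝ}
    (hf : ContDiffOn ℝ ∞ f U) {x} (hx : x ∈ U) : DifferentiableAt ℝ f x :=
  (hf.contDiffAt (hU.mem_nhds hx)).differentiableAt (by simp)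

lemma iter_comb (hU : IsOpen U) {f g : EuclideanSpace ℝ (Fin n) → ℝ}
    (hf : ContDiffOn ℝ ∞ f U) (hg : ContDiffOn ℝ ∞ g U) (a b : ℝ) (i : Fin n) (k : ℕ) :
    ∀ x ∈ U, (pderivE i)^[k] (fun y => a * f y + b * g y) x
      = a * (pderivE i)^[k] f x + b * (pderivE i)^[k] g x := by
  induction k generalizing f g with
  | zero => intro x _; rfl
  | succ k ih =>
    intro x hx
    rw [Function.iterate_succ']
    have h1 : ∀ y ∈ U, (pderivE i)^[k] (fun y => a * f y + b * g y) y
        = a * (pderivE i)^[k] f y + b * (pderivE i)^[k] g y := ih hf hg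
    calc pderivE i ((pderivE i)^[k] fun y => a * f y + b * g y) x
        = pderivE i (fun y => a * (pderivE i)^[k] f y + b * (pderivE i)^[k] g y) x :=
          pderivE_congrOn hU h1 hx i
      _ = a * pderivE i ((pderivE i)^[k] f) x + b * pderivE i ((pderivE i)^[k] g) x :=
          pderivE_comb (diffAt_of hU (iter_contDiffOn hU hf i k) hx)
            (diffAt_of hU (iter_contDiffOn hU hg i k) hx) a b i
      _ = a * (pderivE i ∘ (pderivE i)^[k]) f x + b * (pderivE i ∘ (pderivE i)^[k]) g x :=
          rfl

lemma iter_const_mul (hU : IsOpen U) {f : EuclideanSpace ℝ (Fin n) → ℝ}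
    (hf : ContDiffOn ℝ ∞ f U) (a : ℝ) (i : Fin n) (k : ℕ) :
    ∀ x ∈ U, (pderivE i)^[k] (fun y => a * f y) x = a * (pderivE i)^[k] f x := by
  intro x hx
  have h := iter_comb hU hf hf a 0 i k x hx
  have h2 : ∀ y ∈ U, (fun y => a * f y) y = (fun y => a * f y + 0 * f y) y := by
    intro y _; ring
  rw [iter_congrOn hU h2 i k x hx, h]; ring

lemma smul_comp_contDiffOn (hU : IsOpen U) {g : EuclideanSpace ℝ (Fin n) → ℝ}
    (hg : ContDiffOn ℝ ∞ g U) {c : ℝ} (hc : ∀ x ∈ U, c • x ∈ U) :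
    ContDiffOn ℝ ∞ (fun y => g (c • y)) U := by
  exact hg.comp ((contDiff_const_smul c).contDiffOn) hc

lemma iter_scale (hU : IsOpen U) {g : EuclideanSpace ℝ (Fin n) → ℝ}
    (hg : ContDiffOn ℝ ∞ g U) {c : ℝ} (hc : ∀ x ∈ U, c • x ∈ U) (i : Fin n) (k : ℕ) :
    ∀ x ∈ U, (pderivE i)^[k] (fun y => g (c • y)) x = c ^ k * (pderivE i)^[k] g (c • x) := by
  induction k generalizing g with
  | zero => intro x _; simp
  | succ k ih =>
    intro x hx
    rw [Function.iterate_succ']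
    calc pderivE i ((pderivE i)^[k] fun y => g (c • y)) x
        = pderivE i (fun y => c ^ k * (pderivE i)^[k] g (c • y)) x :=
          pderivE_congrOn hU (ih hg) hx i
      _ = c ^ k * pderivE i (fun y => (pderivE i)^[k] g (c • y)) x :=
          pderivE_const_mul
            (diffAt_of hU (smul_comp_contDiffOn hU (iter_contDiffOn hU hg i k) hc) hx) _ i
      _ = c ^ k * (c * pderivE i ((pderivE i)^[k] g) (c • x)) :=
          by rw [pderivE_smul_comp c
            (diffAt_of hU (iter_contDiffOn hU hg i k) (hc x hx)) i]
      _ = c ^ (k+1) * (pderivE i ∘ (pderivE i)^[k]) g (c • x) := by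
          show _ = c ^ (k+1) * pderivE i ((pderivE i)^[k] g) (c • x); ring

variable (γ : Fin n → ℕ)

def Mfold (l : List (Fin n)) (f : EuclideanSpace ℝ (Fin n) → ℝ) :
    EuclideanSpace ℝ (Fin n) → ℝ :=
  l.foldr (fun i g => (pderivE i)^[γ i] g) f

lemma Mfold_contDiffOn (hU : IsOpen U) (l : List (Fin n))
    {f : EuclideanSpace ℝ (Fin n) → ℝ} (hf : ContDiffOn ℝ ∞ f U) :
    ContDiffOn ℝ ∞ (Mfold γ l f) U := by
  induction l with
  | nil => exact hf
  | cons i l ih => exact iter_contDiffOn hU ih i (γ i)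

lemma Mfold_congrOn (hU : IsOpen U) (l : List (Fin n))
    {f g : EuclideanSpace ℝ (Fin n) → ℝ} (h : ∀ y ∈ U, f y = g y) :
    ∀ x ∈ U, Mfold γ l f x = Mfold γ l g x := by
  induction l with
  | nil => exact h
  | cons i l ih => exact iter_congrOn hU ih i (γ i)

lemma Mfold_comb (hU : IsOpen U) (l : List (Fin n))
    {f g : EuclideanSpace ℝ (Fin n) → ℝ}
    (hf : ContDiffOn ℝ ∞ f U) (hg : ContDiffOn ℝ ∞ g U) (a b : ℝ) :
    ∀ x ∈ U, Mfold γ l (fun y => a * f y + b * g y) x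
      = a * Mfold γ l f x + b * Mfold γ l g x := by
  induction l generalizing f g with
  | nil => intro x _; rfl
  | cons i l ih =>
    intro x hx
    have h1 : ∀ y ∈ U, Mfold γ l (fun y => a * f y + b * g y) y
        = (fun y => a * Mfold γ l f y + b * Mfold γ l g y) y := ih hf hg
    calc Mfold γ (i :: l) (fun y => a * f y + b * g y) x
        = (pderivE i)^[γ i] (fun y => a * Mfold γ l f y + b * Mfold γ l g y) x :=
          iter_congrOn hU h1 i (γ i) x hx
      _ = a * (pderivE i)^[γ i] (Mfold γ l f) x + b * (pderivE i)^[γ i] (Mfold γ l g) x :=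
          iter_comb hU (Mfold_contDiffOn γ hU l hf) (Mfold_contDiffOn γ hU l hg) a b i (γ i) x hx
      _ = a * Mfold γ (i :: l) f x + b * Mfold γ (i :: l) g x := rfl

lemma Mfold_scale (hU : IsOpen U) (l : List (Fin n))
    {g : EuclideanSpace ℝ (Fin n) → ℝ} (hg : ContDiffOn ℝ ∞ g U)
    {c : ℝ} (hc : ∀ x ∈ U, c • x ∈ U) :
    ∀ x ∈ U, Mfold γ l (fun y => g (c • y)) x
      = c ^ ((l.map γ).sum) * Mfold γ l g (c • x) := by
  induction l generalizing g with
  | nil => intro x _; simp [Mfold]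
  | cons i l ih =>
    intro x hx
    have h1 : ∀ y ∈ U, Mfold γ l (fun y => g (c • y)) y
        = (fun y => c ^ ((l.map γ).sum) * Mfold γ l g (c • y)) y := ih hg
    calc Mfold γ (i :: l) (fun y => g (c • y)) x
        = (pderivE i)^[γ i] (fun y => c ^ ((l.map γ).sum) * Mfold γ l g (c • y)) x :=
          iter_congrOn hU h1 i (γ i) x hx
      _ = c ^ ((l.map γ).sum) * (pderivE i)^[γ i] (fun y => Mfold γ l g (c • y)) x :=
          iter_const_mul hU (smul_comp_contDiffOn hU (Mfold_contDiffOn γ hU l hg) hc) _ i (γ i) x hx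
      _ = c ^ ((l.map γ).sum) * (c ^ (γ i) * (pderivE i)^[γ i] (Mfold γ l g) (c • x)) := by
          rw [iter_scale hU (Mfold_contDiffOn γ hU l hg) hc i (γ i) x hx]
      _ = c ^ (((i :: l).map γ).sum) * Mfold γ (i :: l) g (c • x) := by
          show _ = c ^ (γ i + (l.map γ).sum) * (pderivE i)^[γ i] (Mfold γ l g) (c • x)
          rw [pow_add]; ring


lemma fundGamma_contDiffOn (n m : ℕ) :
    ContDiffOn ℝ ∞ (fundGamma n m) {x : EuclideanSpace ℝ (Fin n) | x ≠ 0} := by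
  intro x hx
  have hx' : (x : EuclideanSpace ℝ (Fin n)) ≠ 0 := hx
  have hnorm : ContDiffAt ℝ ∞ (fun y : EuclideanSpace ℝ (Fin n) => ‖y‖) x :=
    contDiffAt_norm ℝ hx'
  have hne : ‖x‖ ≠ 0 := norm_ne_zero_iff.mpr hx'
  have h1 : ContDiffAt ℝ ∞ (fun y : EuclideanSpace ℝ (Fin n) =>
      ‖y‖ ^ ((2 * m : ℝ) - n)) x := hnorm.rpow_const_of_ne hne
  have h2 : ContDiffAt ℝ ∞ (fun y : EuclideanSpace ℝ (Fin n) =>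
      Real.log ‖y‖) x := hnorm.log hne
  unfold fundGamma
  split
  · exact h1.contDiffWithinAt
  · exact (h1.mul h2).contDiffWithinAt

lemma normsq_eq (x : EuclideanSpace ℝ (Fin n)) : ‖x‖ ^ 2 = ∑ i, x i ^ 2 := by
  rw [EuclideanSpace.norm_eq, Real.sq_sqrt (by positivity)]
  simp [sq_abs]

lemma Q_contDiff (m : ℕ) (h : ¬ (Odd n ∨ 2 * m < n)) :
    ContDiff ℝ ∞ (fun x : EuclideanSpace ℝ (Fin n) => ‖x‖ ^ ((2 * m : ℝ) - n)) := by
  push_neg at h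
  obtain ⟨hev, hle⟩ := h
  rw [Nat.not_odd_iff_even] at hev
  obtain ⟨j, hj⟩ := hev
  have hjm : j ≤ m := by omega
  have hexp : (2 * m : ℝ) - n = ((2 * (m - j) : ℕ) : ℝ) := by
    have : (n : ℝ) = 2 * j := by rw [hj]; push_cast; ring
    rw [this]; push_cast [Nat.cast_sub hjm]; ring
  have hfun : (fun x : EuclideanSpace ℝ (Fin n) => ‖x‖ ^ ((2 * m : ℝ) - n))
      = fun x => (∑ i, x i ^ 2) ^ (m - j) := by
    funext x
    rw [hexp, Real.rpow_natCast, pow_mul, normsq_eq]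
  rw [hfun]
  apply ContDiff.pow
  apply ContDiff.sum
  intro i _
  exact (ContDiff.pow (EuclideanSpace.proj (𝕜 := ℝ) i).contDiff 2)

lemma G_zero (hn : 2 ≤ n) (m : ℕ) (hγ : ∑ i, γ i = 2 * m)
    (hQ : ContDiff ℝ ∞ (fun x : EuclideanSpace ℝ (Fin n) => ‖x‖ ^ ((2 * m : ℝ) - n))) :
    ∀ x, Mfold γ (List.finRange n)
      (fun x : EuclideanSpace ℝ (Fin n) => ‖x‖ ^ ((2 * m : ℝ) - n)) x = 0 := by
  set Q : EuclideanSpace ℝ (Fin n) → ℝ := fun x => ‖x‖ ^ ((2 * m : ℝ) - n) with hQdef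
  set G : EuclideanSpace ℝ (Fin n) → ℝ := Mfold γ (List.finRange n) Q with hGdef
  have hS : ((List.finRange n).map γ).sum = 2 * m := by
    rw [← Fin.sum_univ_def]; exact hγ
  have hGcont : Continuous G := by
    have := Mfold_contDiffOn γ isOpen_univ (List.finRange n) hQ.contDiffOn
    rw [contDiffOn_univ] at this
    exact this.continuous
  -- scaling identity
  have key : ∀ t : ℝ, 0 < t → ∀ x, (t : ℝ) ^ (2 * m) * G (t • x)
      = t ^ ((2 * m : ℝ) - n) * G x := by
    intro t ht x
    have h1 : ∀ y, Q (t • y) = t ^ ((2 * m : ℝ) - n) * Q y + 0 * Q y := by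
      intro y
      simp only [hQdef, norm_smul, Real.norm_eq_abs, abs_of_pos ht]
      rw [Real.mul_rpow ht.le (norm_nonneg y)]
      ring
    have h2 := Mfold_scale γ isOpen_univ (List.finRange n) hQ.contDiffOn
      (c := t) (fun y _ => trivial) x trivial
    have h3 := Mfold_congrOn γ isOpen_univ (List.finRange n)
      (f := fun y => Q (t • y))
      (g := fun y => t ^ ((2 * m : ℝ) - n) * Q y + 0 * Q y)
      (fun y _ => h1 y) x trivial
    have h4 := Mfold_comb γ isOpen_univ (List.finRange n) hQ.contDiffOn hQ.contDiffOn
      (t ^ ((2 * m : ℝ) - n)) 0 x trivial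
    rw [hS] at h2
    rw [← hGdef] at h2 h4
    rw [h3, h4] at h2
    rw [← h2]; ring
  intro x
  have hGx : ∀ t : ℝ, 0 < t → G x = t ^ (n : ℕ) * G (t • x) := by
    intro t ht
    have h := key t ht x
    have hrw : (t : ℝ) ^ ((2 * m : ℝ) - n) * t ^ ((n : ℝ)) = t ^ ((2 * m : ℝ)) := by
      rw [← Real.rpow_add ht]; ring_nf
    have h2m : (t : ℝ) ^ (2 * m) = t ^ ((2 * m : ℝ)) := by
      rw [← Real.rpow_natCast t (2 * m)]; norm_num
    have hn' : (t : ℝ) ^ (n : ℕ) = t ^ ((n : ℝ)) := (Real.rpow_natCast t n).symm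
    have hne : t ^ ((2 * m : ℝ) - n) ≠ 0 := by positivity
    apply mul_left_cancel₀ hne
    rw [← h, h2m, ← hrw, ← hn']
    ring
  have hcont : Filter.Tendsto (fun t : ℝ => t ^ (n : ℕ) * G (t • x))
      (nhdsWithin 0 (Set.Ioi 0)) (nhds ((0 : ℝ) ^ (n : ℕ) * G ((0:ℝ) • x))) := by
    apply Filter.Tendsto.mono_left _ nhdsWithin_le_nhds
    exact ((continuous_pow (n:ℕ)).mul (hGcont.comp (continuous_id.smul continuous_const))).tendsto 0
  have hzero : (0 : ℝ) ^ (n : ℕ) * G ((0:ℝ) • x) = 0 := by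
    rw [zero_pow (by omega)]; ring
  rw [hzero] at hcont
  have hconst : Filter.Tendsto (fun t : ℝ => t ^ (n : ℕ) * G (t • x))
      (nhdsWithin 0 (Set.Ioi 0)) (nhds (G x)) := by
    apply Filter.Tendsto.congr' _ tendsto_const_nhds
    filter_upwards [self_mem_nhdsWithin] with t ht
    exact hGx t ht
  exact tendsto_nhds_unique hconst hcont

lemma F_scale (hn : 2 ≤ n) (m : ℕ) (hγ : ∑ i, γ i = 2 * m) :
    ∀ r : ℝ, r ≠ 0 → ∀ x : EuclideanSpace ℝ (Fin n), x ≠ 0 →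
      Mfold γ (List.finRange n) (fundGamma n m) (r • x)
        = |r| ^ (-(n : ℝ)) * Mfold γ (List.finRange n) (fundGamma n m) x := by
  set U : Set (EuclideanSpace ℝ (Fin n)) := {x | x ≠ 0} with hUdef
  have hUopen : IsOpen U := isOpen_compl_singleton
  have hΓ := fundGamma_contDiffOn n m
  set Γ : EuclideanSpace ℝ (Fin n) → ℝ := fundGamma n m with hΓdef
  set F : EuclideanSpace ℝ (Fin n) → ℝ := Mfold γ (List.finRange n) Γ with hFdef
  set a : ℝ := (2 * m : ℝ) - n with hadef
  have hS : ((List.finRange n).map γ).sum = 2 * m := by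
    rw [← Fin.sum_univ_def]; exact hγ
  -- positive scaling
  have hpos : ∀ t : ℝ, 0 < t → ∀ x : EuclideanSpace ℝ (Fin n), x ≠ 0 →
      F (t • x) = t ^ (-(n : ℝ)) * F x := by
    intro t ht x hx
    have hc : ∀ y ∈ U, t • y ∈ U := by
      intro y hy
      simp only [hUdef, Set.mem_setOf_eq] at *
      exact smul_ne_zero (ne_of_gt ht) hy
    have key : (t : ℝ) ^ (2 * m) * F (t • x) = t ^ a * F x := by
      by_cases h : Odd n ∨ 2 * m < n
      · have h1 : ∀ y ∈ U, Γ (t • y) = t ^ a * Γ y + 0 * Γ y := by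
          intro y hy
          simp only [hΓdef, fundGamma, if_pos h, norm_smul, Real.norm_eq_abs,
            abs_of_pos ht]
          rw [Real.mul_rpow ht.le (norm_nonneg y)]
          ring
        have h2 := Mfold_scale γ hUopen (List.finRange n) hΓ hc x hx
        have h3 := Mfold_congrOn γ hUopen (List.finRange n) h1 x hx
        have h4 := Mfold_comb γ hUopen (List.finRange n) hΓ hΓ (t ^ a) 0 x hx
        rw [hS] at h2
        rw [h3, h4] at h2
        rw [← h2]; ring
      · set Q : EuclideanSpace ℝ (Fin n) → ℝ := fun x => ‖x‖ ^ a with hQdef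
        have hQ : ContDiff ℝ ∞ Q := Q_contDiff m h
        have hG0 := G_zero γ hn m hγ hQ
        have hnormpos : ∀ y : EuclideanSpace ℝ (Fin n), y ∈ U → (0:ℝ) < ‖y‖ := by
          intro y hy; exact norm_pos_iff.mpr hy
        have h1 : ∀ y ∈ U, Γ (t • y) = t ^ a * Γ y + (t ^ a * Real.log t) * Q y := by
          intro y hy
          have hy' : (0:ℝ) < ‖y‖ := hnormpos y hy
          simp only [hΓdef, fundGamma, if_neg h, norm_smul, Real.norm_eq_abs,
            abs_of_pos ht, hQdef]
          rw [Real.mul_rpow ht.le (norm_nonneg y),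
            Real.log_mul (ne_of_gt ht) (ne_of_gt hy')]
          ring
        have h2 := Mfold_scale γ hUopen (List.finRange n) hΓ hc x hx
        have h3 := Mfold_congrOn γ hUopen (List.finRange n) h1 x hx
        have h4 := Mfold_comb γ hUopen (List.finRange n) hΓ hQ.contDiffOn
          (t ^ a) (t ^ a * Real.log t) x hx
        rw [hS] at h2
        rw [h3, h4, hG0 x] at h2
        rw [← h2]; ring
    -- now solve for F (t • x)
    have h2m : (t : ℝ) ^ (2 * m) = t ^ ((2 * m : ℕ) : ℝ) := (Real.rpow_natCast t (2*m)).symm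
    have hne : (t : ℝ) ^ (2 * m) ≠ 0 := by positivity
    apply mul_left_cancel₀ hne
    rw [key, h2m, ← mul_assoc, ← Real.rpow_add ht]
    have haa : a = ((2 * m : ℕ) : ℝ) + -(n : ℝ) := by rw [hadef]; push_cast; ring
    rw [haa]
  -- evenness
  intro r hr x hx
  rcases lt_trichotomy r 0 with hneg | hzero | hposr
  · have habs : |r| = -r := abs_of_neg hneg
    have hc : ∀ y ∈ U, r • y ∈ U := fun y hy => smul_ne_zero hr hy
    have hc' : ∀ y ∈ U, |r| • y ∈ U := fun y hy => smul_ne_zero (by positivity) hy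
    have hfun : ∀ y ∈ U, Γ (r • y) = Γ (|r| • y) := by
      intro y _
      simp only [hΓdef, fundGamma, norm_smul, Real.norm_eq_abs, abs_abs]
    have h2 := Mfold_scale γ hUopen (List.finRange n) hΓ hc x hx
    have h2' := Mfold_scale γ hUopen (List.finRange n) hΓ hc' x hx
    have h3 := Mfold_congrOn γ hUopen (List.finRange n) hfun x hx
    rw [hS] at h2 h2'
    rw [h3, h2'] at h2
    have hpow : r ^ (2 * m) = |r| ^ (2 * m) := by
      rw [pow_mul, pow_mul, sq_abs]
    rw [hpow] at h2
    have hne : |r| ^ (2 * m) ≠ 0 := by positivity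
    have h5 : F (r • x) = F (|r| • x) := (mul_left_cancel₀ hne h2).symm
    rw [h5]
    exact hpos |r| (by positivity) x hx
  · exact absurd hzero hr
  · rw [abs_of_pos hposr]
    exact hpos r hposr x hx

end AuxMDC

/-- choice of `t₀` making `D^γΓ` nearly constant on perturbations. -/
theorem multiDeriv_fundGamma_comparable {n m : ℕ} (hn : 2 ≤ n) (hm : 1 ≤ m)
    (γ : Fin n → ℕ) (hγ : ∑ i, γ i = 2 * m)
    (u₀ : EuclideanSpace ℝ (Fin n)) (hu₀ : ‖u₀‖ = 1) (C₀ : ℝ) (hC₀ : 0 < C₀)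
    (hlow : ∀ t : ℝ, 0 < t →
      C₀ * t ^ (-(n : ℝ)) ≤ |multiDeriv γ (fundGamma n m) (t • u₀)|) :
    ∃ t₀ : ℝ, 0 < t₀ ∧ ∀ v : EuclideanSpace ℝ (Fin n), ‖v‖ ≤ 2 → ∀ r : ℝ, r ≠ 0 →
      |multiDeriv γ (fundGamma n m) (r • (t₀ • u₀ + v)) -
          multiDeriv γ (fundGamma n m) (r • (t₀ • u₀))| ≤
        (1 / 2) * |multiDeriv γ (fundGamma n m) (r • (t₀ • u₀))| := by
  classical
  have hrfl : multiDeriv γ (fundGamma n m) = AuxMDC.Mfold γ (List.finRange n) (fundGamma n m) := rfl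
  set F : EuclideanSpace ℝ (Fin n) → ℝ := AuxMDC.Mfold γ (List.finRange n) (fundGamma n m) with hFdef
  have hscale : ∀ r : ℝ, r ≠ 0 → ∀ x : EuclideanSpace ℝ (Fin n), x ≠ 0 →
      F (r • x) = |r| ^ (-(n : ℝ)) * F x := AuxMDC.F_scale γ hn m hγ
  have hu₀ne : u₀ ≠ 0 := by
    intro h; rw [h, norm_zero] at hu₀; norm_num at hu₀
  have hFcont : ContinuousAt F u₀ := by
    have h1 := AuxMDC.Mfold_contDiffOn γ (U := {x : EuclideanSpace ℝ (Fin n) | x ≠ 0})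
      isOpen_compl_singleton (List.finRange n) (AuxMDC.fundGamma_contDiffOn n m)
    have h2 : ContDiffAt ℝ (⊤ : ℕ∞) F u₀ :=
      h1.contDiffAt (isOpen_compl_singleton.mem_nhds hu₀ne)
    exact h2.continuousAt
  have hC2 : 0 < C₀ / 2 := by positivity
  obtain ⟨δ, hδ, hδ2⟩ := Metric.continuousAt_iff.mp hFcont (C₀ / 2) hC2
  set t₀ : ℝ := max 3 (4 / δ) with ht₀def
  have ht₀3 : (3 : ℝ) ≤ t₀ := le_max_left _ _
  have ht₀δ : 4 / δ ≤ t₀ := le_max_right _ _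
  have ht₀ : 0 < t₀ := lt_of_lt_of_le (by norm_num) ht₀3
  refine ⟨t₀, ht₀, ?_⟩
  intro v hv r hr
  set w : EuclideanSpace ℝ (Fin n) := t₀⁻¹ • v with hwdef
  have hw : ‖w‖ ≤ 2 / t₀ := by
    rw [hwdef, norm_smul, Real.norm_eq_abs, abs_of_pos (inv_pos.mpr ht₀)]
    rw [div_eq_inv_mul]
    exact mul_le_mul_of_nonneg_left hv (le_of_lt (inv_pos.mpr ht₀))
  have hw1 : ‖w‖ < 1 := by
    refine lt_of_le_of_lt hw ?_
    rw [div_lt_one ht₀]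
    linarith
  have hwδ : ‖w‖ < δ := by
    refine lt_of_le_of_lt hw ?_
    have h4δ : 0 < 4 / δ := by positivity
    have : 2 / t₀ ≤ 2 / (4 / δ) := by
      apply div_le_div_of_nonneg_left (by norm_num) h4δ ht₀δ
    have h2 : 2 / (4 / δ) = δ / 2 := by field_simp; ring
    rw [h2] at this
    linarith
  have hune : u₀ + w ≠ 0 := by
    intro h
    have hw' : w = -u₀ := by
      have := eq_neg_of_add_eq_zero_right h
      exact this
    rw [hw', norm_neg, hu₀] at hw1
    norm_num at hw1
  have hrt : r * t₀ ≠ 0 := mul_ne_zero hr (ne_of_gt ht₀)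
  have key1 : r • (t₀ • u₀ + v) = (r * t₀) • (u₀ + w) := by
    have hvw : (r * t₀) • w = r • v := by
      rw [hwdef, smul_smul]
      congr 1
      field_simp
    rw [smul_add, smul_add, smul_smul, hvw]
  have key2 : r • (t₀ • u₀) = (r * t₀) • u₀ := (smul_smul r t₀ u₀)
  rw [hrfl, key1, key2, hscale (r * t₀) hrt (u₀ + w) hune,
    hscale (r * t₀) hrt u₀ hu₀ne]
  have hcpos : (0 : ℝ) < |r * t₀| ^ (-(n : ℝ)) :=
    Real.rpow_pos_of_pos (abs_pos.mpr hrt) _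
  rw [← mul_sub, abs_mul (|r * t₀| ^ (-(n : ℝ))) (F (u₀ + w) - F u₀),
    abs_mul (|r * t₀| ^ (-(n : ℝ))) (F u₀), abs_of_pos hcpos]
  have hFu₀ : C₀ ≤ |F u₀| := by
    have h := hlow 1 one_pos
    rw [Real.one_rpow, mul_one, one_smul] at h
    exact h
  have hdiff : |F (u₀ + w) - F u₀| ≤ C₀ / 2 := by
    have h := hδ2 (show dist (u₀ + w) u₀ < δ by
      rw [dist_eq_norm]; simpa using hwδ)
    rw [Real.dist_eq] at h
    exact le_of_lt h
  calc |r * t₀| ^ (-(n : ℝ)) * |F (u₀ + w) - F u₀|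
      ≤ |r * t₀| ^ (-(n : ℝ)) * (C₀ / 2) := by
        exact mul_le_mul_of_nonneg_left hdiff (le_of_lt hcpos)
    _ ≤ |r * t₀| ^ (-(n : ℝ)) * (|F u₀| / 2) := by
        apply mul_le_mul_of_nonneg_left _ (le_of_lt hcpos)
        linarith
    _ = 1 / 2 * (|r * t₀| ^ (-(n : ℝ)) * |F u₀|) := by ring
end
end

section
/- Let Ω ⊂ ℝⁿ be a bounded domain, 1 < p < ∞, 0 < β < 1, let w be a weight, and let C > 0. Suppose that for every β-admissible ball B ⊂ Ω there exists a ball B' ⊂ Ω of the same radius such that: (i) for every nonnegative measurable f supported in B, ((1/|B|)∫_B f)^p · w(B') ≤ C ∫_B f^p w dx; and (ii) for every nonnegative measurable g supported in B', ((1/|B'|)∫_{B'} g)^p · w(B) ≤ C ∫_{B'} g^p w dx. Then there exists C' > 0 such that for every β-admissible ball B ⊂ Ω and every nonnegative measurable f, ((1/|B|)∫_B f)^p ≤ (C'/w(B)) ∫_B f^p w dx; consequently w ∈ A_p^β(Ω). -/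
open MeasureTheory Metric Set
open scoped ENNReal NNReal Classical

noncomputable section

/-- from the pair-of-balls averaging inequalities to `A_p^β(Ω)`. -/
theorem apLocBeta_of_ball_pair_bounds {n : ℕ} (Ω : Set (EuclideanSpace ℝ (Fin n)))
    (hΩo : IsOpen Ω) (hΩc : IsConnected Ω) (hΩb : Bornology.IsBounded Ω)
    (p β C : ℝ) (hp : 1 < p) (hβ0 : 0 < β) (hβ1 : β < 1) (hC : 0 < C)
    (w : EuclideanSpace ℝ (Fin n) → ℝ) (hw : IsWeight w)
    (H : ∀ c r, IsAdmissibleBall Ω β c r →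
      ∃ c' : EuclideanSpace ℝ (Fin n), ball c' r ⊆ Ω ∧
        (∀ f : EuclideanSpace ℝ (Fin n) → ℝ, Measurable f → (∀ x, 0 ≤ f x) →
          (∀ x, x ∉ ball c r → f x = 0) →
          ((volume (ball c r))⁻¹ * ∫⁻ x in ball c r, ENNReal.ofReal (f x)) ^ p *
              (∫⁻ x in ball c' r, ENNReal.ofReal (w x)) ≤
            ENNReal.ofReal C *
              ∫⁻ x in ball c r, ENNReal.ofReal (f x) ^ p * ENNReal.ofReal (w x)) ∧
        (∀ g : EuclideanSpace ℝ (Fin n) → ℝ, Measurable g → (∀ x, 0 ≤ g x) →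
          (∀ x, x ∉ ball c' r → g x = 0) →
          ((volume (ball c' r))⁻¹ * ∫⁻ x in ball c' r, ENNReal.ofReal (g x)) ^ p *
              (∫⁻ x in ball c r, ENNReal.ofReal (w x)) ≤
            ENNReal.ofReal C *
              ∫⁻ x in ball c' r, ENNReal.ofReal (g x) ^ p * ENNReal.ofReal (w x))) :
    (∃ C' : ℝ, 0 < C' ∧ ∀ c r, IsAdmissibleBall Ω β c r →
      ∀ f : EuclideanSpace ℝ (Fin n) → ℝ, Measurable f → (∀ x, 0 ≤ f x) →
        ((volume (ball c r))⁻¹ * ∫⁻ x in ball c r, ENNReal.ofReal (f x)) ^ p ≤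
          (ENNReal.ofReal C' / ∫⁻ x in ball c r, ENNReal.ofReal (w x)) *
            ∫⁻ x in ball c r, ENNReal.ofReal (f x) ^ p * ENNReal.ofReal (w x)) ∧
    IsApLocBeta Ω β p w := by
  obtain ⟨hwli, hwpos⟩ := hw
  have hw₁m : Measurable (hwli.aestronglyMeasurable.mk w) :=
    hwli.aestronglyMeasurable.stronglyMeasurable_mk.measurable
  set w₁ := hwli.aestronglyMeasurable.mk w with hw₁def
  have hww₁ : w =ᵐ[volume] w₁ := hwli.aestronglyMeasurable.ae_eq_mk
  -- basic facts about admissible balls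
  have facts : ∀ (c : EuclideanSpace ℝ (Fin n)) (r : ℝ), 0 < r → ball c r ⊆ Ω →
      volume (ball c r) ≠ 0 ∧ volume (ball c r) ≠ ⊤ ∧
      (∫⁻ x in ball c r, ENNReal.ofReal (w x)) ≠ 0 ∧
      (∫⁻ x in ball c r, ENNReal.ofReal (w x)) ≠ ⊤ := by
    intro c r hr _
    refine ⟨(measure_ball_pos volume c hr).ne', measure_ball_lt_top.ne, ?_, ?_⟩
    · intro h0
      have hof : AEMeasurable (fun x => ENNReal.ofReal (w x)) (volume.restrict (ball c r)) :=
        ((ENNReal.measurable_ofReal.comp hw₁m).aemeasurable.congr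
          (hww₁.symm.mono fun x hx => by simp only [Function.comp_apply]; rw [hx])).restrict
      have h1 := (lintegral_eq_zero_iff' hof).mp h0
      have h2 : ∀ᵐ x ∂(volume.restrict (ball c r)), 0 < w x := ae_restrict_of_ae hwpos
      have h3 : ∀ᵐ _x ∂(volume.restrict (ball c r)), False := by
        filter_upwards [h1, h2] with x hx1 hx2
        simp only [Pi.zero_apply] at hx1
        exact (ENNReal.ofReal_pos.mpr hx2).ne' hx1
      rw [Filter.eventually_false_iff_eq_bot, ae_eq_bot, Measure.restrict_eq_zero] at h3
      exact (measure_ball_pos volume c hr).ne' h3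
    · have hint : IntegrableOn w (closedBall c r) volume :=
        hwli.integrableOn_isCompact (isCompact_closedBall c r)
      exact ((hint.mono_set ball_subset_closedBall).lintegral_lt_top).ne
  -- the key averaged inequality, with constant C*C
  have key : ∀ (c : EuclideanSpace ℝ (Fin n)) (r : ℝ), IsAdmissibleBall Ω β c r →
      ∀ f : EuclideanSpace ℝ (Fin n) → ℝ, Measurable f → (∀ x, 0 ≤ f x) →
      ((volume (ball c r))⁻¹ * ∫⁻ x in ball c r, ENNReal.ofReal (f x)) ^ p ≤
        (ENNReal.ofReal (C * C) / ∫⁻ x in ball c r, ENNReal.ofReal (w x)) *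
          ∫⁻ x in ball c r, ENNReal.ofReal (f x) ^ p * ENNReal.ofReal (w x) := by
    intro c r hB f hfm hf0
    obtain ⟨c', hc'Ω, H1, H2⟩ := H c r hB
    obtain ⟨hmu0, hmut, hnu0, hnut⟩ := facts c r hB.1 hB.2.1
    obtain ⟨hmu20, hmu2t, hnu20, hnu2t⟩ := facts c' r hB.1 hc'Ω
    have h1 := H1 ((ball c r).indicator f) (hfm.indicator measurableSet_ball)
      (fun x => Set.indicator_nonneg (fun a _ => hf0 a) x)
      (fun x hx => Set.indicator_of_notMem hx f)
    have e1 : (∫⁻ x in ball c r, ENNReal.ofReal ((ball c r).indicator f x)) =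
        ∫⁻ x in ball c r, ENNReal.ofReal (f x) :=
      setLIntegral_congr_fun_ae measurableSet_ball
        (ae_of_all _ fun x hx => by rw [Set.indicator_of_mem hx])
    have e2 : (∫⁻ x in ball c r,
          ENNReal.ofReal ((ball c r).indicator f x) ^ p * ENNReal.ofReal (w x)) =
        ∫⁻ x in ball c r, ENNReal.ofReal (f x) ^ p * ENNReal.ofReal (w x) :=
      setLIntegral_congr_fun_ae measurableSet_ball
        (ae_of_all _ fun x hx => by rw [Set.indicator_of_mem hx])
    rw [e1, e2] at h1
    have h2 := H2 ((ball c' r).indicator fun _ => (1 : ℝ))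
      (measurable_const.indicator measurableSet_ball)
      (fun x => Set.indicator_nonneg (fun a _ => zero_le_one) x)
      (fun x hx => Set.indicator_of_notMem hx _)
    have e3 : (∫⁻ x in ball c' r,
          ENNReal.ofReal ((ball c' r).indicator (fun _ => (1 : ℝ)) x)) =
        volume (ball c' r) := by
      rw [setLIntegral_congr_fun_ae measurableSet_ball
        (ae_of_all _ fun x hx => by rw [Set.indicator_of_mem hx, ENNReal.ofReal_one]),
        setLIntegral_one]
    have e4 : (∫⁻ x in ball c' r,
          ENNReal.ofReal ((ball c' r).indicator (fun _ => (1 : ℝ)) x) ^ p *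
            ENNReal.ofReal (w x)) =
        ∫⁻ x in ball c' r, ENNReal.ofReal (w x) :=
      setLIntegral_congr_fun_ae measurableSet_ball (ae_of_all _ fun x hx => by
        rw [Set.indicator_of_mem hx, ENNReal.ofReal_one, ENNReal.one_rpow, one_mul])
    rw [e3, e4, ENNReal.inv_mul_cancel hmu20 hmu2t, ENNReal.one_rpow, one_mul] at h2
    have chain : ((volume (ball c r))⁻¹ * ∫⁻ x in ball c r, ENNReal.ofReal (f x)) ^ p *
        (∫⁻ x in ball c r, ENNReal.ofReal (w x)) ≤
        ENNReal.ofReal (C * C) *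
          ∫⁻ x in ball c r, ENNReal.ofReal (f x) ^ p * ENNReal.ofReal (w x) := by
      calc ((volume (ball c r))⁻¹ * ∫⁻ x in ball c r, ENNReal.ofReal (f x)) ^ p *
            (∫⁻ x in ball c r, ENNReal.ofReal (w x))
          ≤ ((volume (ball c r))⁻¹ * ∫⁻ x in ball c r, ENNReal.ofReal (f x)) ^ p *
            (ENNReal.ofReal C * ∫⁻ x in ball c' r, ENNReal.ofReal (w x)) :=
            mul_le_mul_right h2 _
        _ = ENNReal.ofReal C *
            (((volume (ball c r))⁻¹ * ∫⁻ x in ball c r, ENNReal.ofReal (f x)) ^ p *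
              ∫⁻ x in ball c' r, ENNReal.ofReal (w x)) := by ring
        _ ≤ ENNReal.ofReal C * (ENNReal.ofReal C *
            ∫⁻ x in ball c r, ENNReal.ofReal (f x) ^ p * ENNReal.ofReal (w x)) :=
            mul_le_mul_right h1 _
        _ = ENNReal.ofReal (C * C) *
            ∫⁻ x in ball c r, ENNReal.ofReal (f x) ^ p * ENNReal.ofReal (w x) := by
            rw [ENNReal.ofReal_mul hC.le]; ring
    have hdiv : (ENNReal.ofReal (C * C) / ∫⁻ x in ball c r, ENNReal.ofReal (w x)) *
        (∫⁻ x in ball c r, ENNReal.ofReal (f x) ^ p * ENNReal.ofReal (w x)) =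
        (ENNReal.ofReal (C * C) *
          ∫⁻ x in ball c r, ENNReal.ofReal (f x) ^ p * ENNReal.ofReal (w x)) /
          (∫⁻ x in ball c r, ENNReal.ofReal (w x)) := by
      rw [div_eq_mul_inv, div_eq_mul_inv]; ring
    rw [hdiv]
    exact (ENNReal.le_div_iff_mul_le (Or.inl hnu0) (Or.inl hnut)).mpr chain
  refine ⟨⟨C * C, mul_pos hC hC, key⟩, C * C, mul_pos hC hC, ?_⟩
  intro c r hB
  obtain ⟨hmu0, hmut, hnu0, hnut⟩ := facts c r hB.1 hB.2.1
  set σ : ℝ := -(1 / (p - 1)) with hσdef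
  have hp1 : (0 : ℝ) < p - 1 := by linarith
  have hσmul : σ * (p - 1) = -1 := by rw [hσdef]; field_simp
  set g : EuclideanSpace ℝ (Fin n) → ℝ :=
    fun x => if 0 < w₁ x then Real.exp (Real.log (w₁ x) * σ) else 0 with hgdef
  have hgm : Measurable g :=
    Measurable.ite (measurableSet_lt measurable_const hw₁m)
      ((hw₁m.log.mul_const σ).exp) measurable_const
  have hg0 : ∀ x, 0 ≤ g x := fun x => by
    by_cases h : 0 < w₁ x <;> simp [hgdef, h, (Real.exp_pos _).le]
  have hgae : ∀ᵐ x ∂(volume : Measure (EuclideanSpace ℝ (Fin n))),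
      g x = w x ^ σ ∧ 0 < w x := by
    filter_upwards [hww₁, hwpos] with x hx hxp
    refine ⟨?_, hxp⟩
    rw [hgdef]
    simp only
    rw [if_pos (hx ▸ hxp), ← hx, ← Real.rpow_def_of_pos hxp]
  have keyk : ∀ k : ℕ,
      (volume (ball c r))⁻¹ * (∫⁻ x in ball c r, ENNReal.ofReal (min (g x) (k : ℝ))) ≤
      ((ENNReal.ofReal (C * C) / ∫⁻ x in ball c r, ENNReal.ofReal (w x)) *
        volume (ball c r)) ^ (1 / (p - 1)) := by
    intro k
    set K := (ENNReal.ofReal (C * C) / ∫⁻ x in ball c r, ENNReal.ofReal (w x)) *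
      volume (ball c r) with hK
    set Ak := (volume (ball c r))⁻¹ *
      ∫⁻ x in ball c r, ENNReal.ofReal (min (g x) (k : ℝ)) with hAk
    have hfkm : Measurable fun x => min (g x) (k : ℝ) := hgm.min measurable_const
    have hfk0 : ∀ x, 0 ≤ min (g x) (k : ℝ) := fun x => le_min (hg0 x) (Nat.cast_nonneg k)
    have h1 := key c r hB (fun x => min (g x) (k : ℝ)) hfkm hfk0
    have hptw : ∀ᵐ x ∂(volume.restrict (ball c r)),
        ENNReal.ofReal (min (g x) (k : ℝ)) ^ p * ENNReal.ofReal (w x) ≤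
          ENNReal.ofReal (min (g x) (k : ℝ)) := by
      refine ae_restrict_of_ae ?_
      filter_upwards [hgae] with x hx
      obtain ⟨hgx, hwx⟩ := hx
      set t := min (g x) (k : ℝ) with ht
      have ht0 : 0 ≤ t := le_min (hg0 x) (Nat.cast_nonneg k)
      rcases eq_or_lt_of_le ht0 with h0 | h0
      · rw [← h0]
        simp [ENNReal.zero_rpow_of_pos (by linarith : (0 : ℝ) < p)]
      · have htle : t ≤ w x ^ σ := hgx ▸ min_le_left _ _
        have hle : t ^ (p - 1) ≤ (w x)⁻¹ := by
          have h2 := Real.rpow_le_rpow ht0 htle hp1.le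
          rwa [← Real.rpow_mul hwx.le, hσmul, Real.rpow_neg_one] at h2
        have hsplit : t ^ p = t ^ (p - 1) * t := by
          rw [show t ^ (p - 1) * t = t ^ (p - 1) * t ^ (1 : ℝ) by rw [Real.rpow_one],
            ← Real.rpow_add h0]
          congr 1; ring
        have hkey : t ^ p * w x ≤ t := by
          calc t ^ p * w x = t ^ (p - 1) * (t * w x) := by rw [hsplit]; ring
            _ ≤ (w x)⁻¹ * (t * w x) :=
                mul_le_mul_of_nonneg_right hle (by positivity)
            _ = t := by field_simp
        calc ENNReal.ofReal t ^ p * ENNReal.ofReal (w x)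
            = ENNReal.ofReal (t ^ p * w x) := by
              rw [ENNReal.ofReal_rpow_of_nonneg ht0 (by linarith : (0 : ℝ) ≤ p),
                ← ENNReal.ofReal_mul (by positivity)]
          _ ≤ ENNReal.ofReal t := ENNReal.ofReal_le_ofReal hkey
    have hint_le : (∫⁻ x in ball c r,
        ENNReal.ofReal (min (g x) (k : ℝ)) ^ p * ENNReal.ofReal (w x)) ≤
        ∫⁻ x in ball c r, ENNReal.ofReal (min (g x) (k : ℝ)) := lintegral_mono_ae hptw
    have hk2 : Ak ^ p ≤ K * Ak := by
      calc Ak ^ p ≤ (ENNReal.ofReal (C * C) / ∫⁻ x in ball c r, ENNReal.ofReal (w x)) *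
            ∫⁻ x in ball c r,
              ENNReal.ofReal (min (g x) (k : ℝ)) ^ p * ENNReal.ofReal (w x) := h1
        _ ≤ (ENNReal.ofReal (C * C) / ∫⁻ x in ball c r, ENNReal.ofReal (w x)) *
            ∫⁻ x in ball c r, ENNReal.ofReal (min (g x) (k : ℝ)) :=
            mul_le_mul_right hint_le _
        _ = K * Ak := by
            rw [hK, hAk, mul_assoc, ← mul_assoc (volume (ball c r)),
              ENNReal.mul_inv_cancel hmu0 hmut, one_mul]
    have hAkt : Ak ≠ ⊤ := by
      have hb : Ak ≤ (volume (ball c r))⁻¹ * ((k : ℝ≥0∞) * volume (ball c r)) := by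
        rw [hAk]
        refine mul_le_mul_right ?_ _
        calc (∫⁻ x in ball c r, ENNReal.ofReal (min (g x) (k : ℝ)))
            ≤ ∫⁻ _x in ball c r, (k : ℝ≥0∞) := by
              refine lintegral_mono fun x => ?_
              refine le_trans (ENNReal.ofReal_le_ofReal (min_le_right _ _)) ?_
              rw [ENNReal.ofReal_natCast]
          _ = (k : ℝ≥0∞) * volume (ball c r) := setLIntegral_const _ _
      exact ne_top_of_le_ne_top
        (ENNReal.mul_ne_top (ENNReal.inv_ne_top.mpr hmu0)
          (ENNReal.mul_ne_top (ENNReal.natCast_ne_top k) hmut)) hb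
    by_cases hA0 : Ak = 0
    · rw [hA0]; exact zero_le ..
    · have hsplit : Ak ^ p = Ak ^ (p - 1) * Ak := by
        rw [show Ak ^ (p - 1) * Ak = Ak ^ (p - 1) * Ak ^ (1 : ℝ) by rw [ENNReal.rpow_one],
          ← ENNReal.rpow_add _ _ hA0 hAkt]
        congr 1; ring
      rw [hsplit] at hk2
      have hk3 : Ak ^ (p - 1) ≤ K := (ENNReal.mul_le_mul_iff_left hA0 hAkt).mp hk2
      have h4 := ENNReal.rpow_le_rpow hk3 (one_div_pos.mpr hp1).le
      rwa [← ENNReal.rpow_mul, mul_one_div_cancel hp1.ne', ENNReal.rpow_one] at h4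
  have hmono : Monotone (fun (k : ℕ) (x : EuclideanSpace ℝ (Fin n)) =>
      ENNReal.ofReal (min (g x) (k : ℝ))) := fun a b hab x =>
    ENNReal.ofReal_le_ofReal (min_le_min le_rfl (Nat.cast_le.mpr hab))
  have hmct : (∫⁻ x in ball c r, ENNReal.ofReal (g x)) =
      ⨆ k : ℕ, ∫⁻ x in ball c r, ENNReal.ofReal (min (g x) (k : ℝ)) := by
    rw [← lintegral_iSup (fun k => (hgm.min measurable_const).ennreal_ofReal)
      hmono]
    refine lintegral_congr fun x => ?_
    refine le_antisymm ?_ (iSup_le fun k => ENNReal.ofReal_le_ofReal (min_le_left _ _))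
    calc ENNReal.ofReal (g x)
        = ENNReal.ofReal (min (g x) ((⌈g x⌉₊ : ℕ) : ℝ)) := by
          rw [min_eq_left (Nat.le_ceil _)]
      _ ≤ ⨆ k : ℕ, ENNReal.ofReal (min (g x) (k : ℝ)) :=
          le_iSup (fun k : ℕ => ENNReal.ofReal (min (g x) (k : ℝ))) ⌈g x⌉₊
  have hA : (volume (ball c r))⁻¹ * ∫⁻ x in ball c r, ENNReal.ofReal (g x) ≤
      ((ENNReal.ofReal (C * C) / ∫⁻ x in ball c r, ENNReal.ofReal (w x)) *
        volume (ball c r)) ^ (1 / (p - 1)) := by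
    rw [hmct, ENNReal.mul_iSup]
    exact iSup_le keyk
  have hcong : (∫⁻ x in ball c r, ENNReal.ofReal (w x ^ σ)) =
      ∫⁻ x in ball c r, ENNReal.ofReal (g x) := by
    refine lintegral_congr_ae (ae_restrict_of_ae ?_)
    filter_upwards [hgae] with x hx
    rw [hx.1]
  rw [hcong]
  calc ((volume (ball c r))⁻¹ * ∫⁻ x in ball c r, ENNReal.ofReal (w x)) *
        ((volume (ball c r))⁻¹ * ∫⁻ x in ball c r, ENNReal.ofReal (g x)) ^ (p - 1)
      ≤ ((volume (ball c r))⁻¹ * ∫⁻ x in ball c r, ENNReal.ofReal (w x)) *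
        (((ENNReal.ofReal (C * C) / ∫⁻ x in ball c r, ENNReal.ofReal (w x)) *
          volume (ball c r)) ^ (1 / (p - 1))) ^ (p - 1) :=
        mul_le_mul_right (ENNReal.rpow_le_rpow hA hp1.le) _
    _ = ENNReal.ofReal (C * C) := by
        rw [← ENNReal.rpow_mul, one_div_mul_cancel hp1.ne', ENNReal.rpow_one,
          div_eq_mul_inv]
        rw [show ((volume (ball c r))⁻¹ * ∫⁻ x in ball c r, ENNReal.ofReal (w x)) *
            (ENNReal.ofReal (C * C) * (∫⁻ x in ball c r, ENNReal.ofReal (w x))⁻¹ *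
              volume (ball c r)) =
            ENNReal.ofReal (C * C) * ((volume (ball c r))⁻¹ * volume (ball c r)) *
              ((∫⁻ x in ball c r, ENNReal.ofReal (w x))⁻¹ *
                ∫⁻ x in ball c r, ENNReal.ofReal (w x)) by ring,
          ENNReal.inv_mul_cancel hmu0 hmut, ENNReal.inv_mul_cancel hnu0 hnut, mul_one, mul_one]
end
end
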